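/- (Constraint bound) Suppose the Slater condition holds with constant η > 0 and Slater vector s ∈ 𝒳, V is a positive integer, α = V², and the decisions are produced by the algorithm with parameters V and α. Define δ = √k·(F + DG), R = VG²/(2α) + 2F, B = k(F + GD)²/2, and θ = max[ δ, (B + RV)/(ηV) + αD²/(ηV(V+1)) + δ(V+2)/(2V) ]. Then for each i ∈ {1,…,k} and all integers T > 0: (1/T)·Σ_{t=0}^{T−1} g_{t,i}(X_t) ≤ θV/T + G²/(4V) + G²(1 + θ√k)²/(4V). -/

import Mathlib

set_option maxHeartbeats 4000000

open scoped RealInnerProductSpace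


private lemma gauss_aux (m : ℕ) :
    ∑ u ∈ Finset.range m, ((m - u : ℕ) : ℝ) = m * (m + 1) / 2 := by
  induction m with
  | zero => simp
  | succ m ih =>
    rw [Finset.sum_range_succ']
    have h1 : ∀ i ∈ Finset.range m, ((m + 1 - (i + 1) : ℕ) : ℝ) = ((m - i : ℕ) : ℝ) := by
      intro i _; congr 1; omega
    rw [Finset.sum_congr rfl h1, ih]
    push_cast
    ring

/-- **Constraint bound (Theorem 3).**  Suppose the Slater condition holds with `η > 0` and
Slater vector `s ∈ 𝒳`, `V` is a positive integer, `α = V²`, and the decisions are produced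
by the algorithm with parameters `V` and `α`.  With `δ = √k(F + DG)`, `R = VG²/(2α) + 2F`,
`B = k(F + GD)²/2` and `θ = max[δ, (B + RV)/(ηV) + αD²/(ηV(V+1)) + δ(V+2)/(2V)]`, for each
`i ∈ {1,…,k}` and all integers `T > 0`:
`(1/T)·Σ_{t=0}^{T−1} g_{t,i}(X_t) ≤ θV/T + G²/(4V) + G²(1 + θ√k)²/(4V)`. -/
theorem stmt8 (n k : ℕ) (hk : 0 < k)
    (𝒳 : Set (EuclideanSpace ℝ (Fin n)))
    (h_ne : 𝒳.Nonempty) (h_cpt : IsCompact 𝒳) (h_cvx : Convex ℝ 𝒳)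
    (D F G : ℝ) (hD : 0 ≤ D) (hF : 0 ≤ F) (hG : 0 ≤ G)
    (hdiam : ∀ x ∈ 𝒳, ∀ y ∈ 𝒳, ‖x - y‖ ≤ D)
    (f : ℕ → EuclideanSpace ℝ (Fin n) → ℝ)
    (g : ℕ → Fin k → EuclideanSpace ℝ (Fin n) → ℝ)
    (hfconv : ∀ t, ConvexOn ℝ 𝒳 (f t))
    (hgconv : ∀ t i, ConvexOn ℝ 𝒳 (g t i))
    (hfbd : ∀ t, ∀ x ∈ 𝒳, |f t x| ≤ F)
    (hgbd : ∀ t i, ∀ x ∈ 𝒳, |g t i x| ≤ F)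
    (f' : ℕ → EuclideanSpace ℝ (Fin n) → EuclideanSpace ℝ (Fin n))
    (g' : ℕ → Fin k → EuclideanSpace ℝ (Fin n) → EuclideanSpace ℝ (Fin n))
    (hfsub : ∀ t, ∀ x ∈ 𝒳, ∀ y ∈ 𝒳, f t x + ⟪f' t x, y - x⟫ ≤ f t y)
    (hgsub : ∀ t i, ∀ x ∈ 𝒳, ∀ y ∈ 𝒳, g t i x + ⟪g' t i x, y - x⟫ ≤ g t i y)
    (hf'bd : ∀ t, ∀ x ∈ 𝒳, ‖f' t x‖ ≤ G)
    (hg'bd : ∀ t i, ∀ x ∈ 𝒳, ‖g' t i x‖ ≤ G)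
    (X : ℕ → EuclideanSpace ℝ (Fin n)) (hX : ∀ t, X t ∈ 𝒳)
    (Q : ℕ → Fin k → ℝ)
    (hQ0 : ∀ i, Q 0 i = 0) (hQ1 : ∀ i, Q 1 i = 0)
    (hQrec : ∀ t i, Q (t + 2) i =
      max (Q (t + 1) i + g t i (X t) + ⟪g' t i (X t), X (t + 1) - X t⟫) 0)
    (V : ℕ) (hV : 0 < V) (α : ℝ) (hαdef : α = (V : ℝ) ^ 2)
    (halg : ∀ t, ∀ x ∈ 𝒳,
      ⟪(V : ℝ) • f' t (X t) + ∑ i, Q (t + 1) i • g' t i (X t), X (t + 1)⟫ +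
          α * ‖X (t + 1) - X t‖ ^ 2 ≤
        ⟪(V : ℝ) • f' t (X t) + ∑ i, Q (t + 1) i • g' t i (X t), x⟫ + α * ‖x - X t‖ ^ 2)
    (η : ℝ) (hη : 0 < η) (s : EuclideanSpace ℝ (Fin n)) (hs : s ∈ 𝒳)
    (hslater : ∀ t i, g t i s ≤ -η)
    (δ R B θ : ℝ)
    (hδ : δ = Real.sqrt k * (F + D * G))
    (hR : R = (V : ℝ) * G ^ 2 / (2 * α) + 2 * F)
    (hB : B = (k : ℝ) * (F + G * D) ^ 2 / 2)
    (hθ : θ = max δ ((B + R * V) / (η * V) + α * D ^ 2 / (η * V * (V + 1)) +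
      δ * ((V : ℝ) + 2) / (2 * V))) :
    ∀ (i : Fin k) (T : ℕ), 0 < T →
      (1 / (T : ℝ)) * ∑ t ∈ Finset.range T, g t i (X t) ≤
        θ * V / T + G ^ 2 / (4 * V) + G ^ 2 * (1 + θ * Real.sqrt k) ^ 2 / (4 * V) := by
  have hVpos : (0:ℝ) < V := by exact_mod_cast hV
  have hαpos : 0 < α := by rw [hαdef]; positivity
  have hδ0 : 0 ≤ δ := by rw [hδ]; positivity
  have hθδ : δ ≤ θ := by rw [hθ]; exact le_max_left _ _
  have hθ0 : 0 ≤ θ := le_trans hδ0 hθδ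
  have hQpos : ∀ t i, 0 ≤ Q t i := by
    intro t i
    match t with
    | 0 => simp [hQ0]
    | 1 => simp [hQ1]
    | (t+2) => rw [hQrec]; exact le_max_right _ _
  -- the queue vector in Euclidean space
  set QQ : ℕ → EuclideanSpace ℝ (Fin k) :=
    fun t => (WithLp.equiv 2 (Fin k → ℝ)).symm (Q t) with hQQdef
  have hQQapp : ∀ t i, QQ t i = Q t i := fun t i => rfl
  have hQQsq : ∀ t, ‖QQ t‖ ^ 2 = ∑ i, Q t i ^ 2 := by
    intro t
    rw [EuclideanSpace.norm_eq, Real.sq_sqrt (by positivity)]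
    simp [hQQapp, sq_abs]
  have hQQ1 : ‖QQ 1‖ = 0 := by
    have : ‖QQ 1‖ ^ 2 = 0 := by rw [hQQsq]; simp [hQ1]
    nlinarith [norm_nonneg (QQ 1)]
  have hQQ0 : ‖QQ 0‖ = 0 := by
    have : ‖QQ 0‖ ^ 2 = 0 := by rw [hQQsq]; simp [hQ0]
    nlinarith [norm_nonneg (QQ 0)]
  have hQle : ∀ t (i : Fin k), Q t i ≤ ‖QQ t‖ := by
    intro t i
    have h1 : Q t i ^ 2 ≤ ∑ j, Q t j ^ 2 :=
      Finset.single_le_sum (f := fun j => Q t j ^ 2) (fun j _ => sq_nonneg _)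
        (Finset.mem_univ i)
    nlinarith [hQQsq t, norm_nonneg (QQ t), hQpos t i]
  have hsumQ_ge : ∀ t, ‖QQ t‖ ≤ ∑ i, Q t i := by
    intro t
    have h1 : ∑ i, Q t i ^ 2 ≤ (∑ i, Q t i) ^ 2 :=
      Finset.sum_sq_le_sq_sum_of_nonneg (fun i _ => hQpos t i)
    have h2 : 0 ≤ ∑ i, Q t i := Finset.sum_nonneg fun i _ => hQpos t i
    nlinarith [hQQsq t, norm_nonneg (QQ t)]
  have hsumQ_le : ∀ t, ∑ i, Q t i ≤ Real.sqrt k * ‖QQ t‖ := by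
    intro t
    have h1 : (∑ i, Q t i) ^ 2 ≤ (k : ℝ) * ∑ i, Q t i ^ 2 := by
      simpa using (sq_sum_le_card_mul_sum_sq (s := Finset.univ) (f := fun i => Q t i))
    have h2 : 0 ≤ ∑ i, Q t i := Finset.sum_nonneg fun i _ => hQpos t i
    have h3 : (Real.sqrt k * ‖QQ t‖) ^ 2 = (k : ℝ) * ∑ i, Q t i ^ 2 := by
      rw [mul_pow, Real.sq_sqrt (by positivity), hQQsq]
    nlinarith [mul_nonneg (Real.sqrt_nonneg (k:ℝ)) (norm_nonneg (QQ t))]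
  have hDX : ∀ a b, ‖X a - X b‖ ≤ D := fun a b => hdiam _ (hX a) _ (hX b)
  have hDs : ∀ a, ‖s - X a‖ ≤ D := fun a => hdiam _ hs _ (hX a)
  -- bound on the linearized constraint functions
  have hgtilde : ∀ t i, |g t i (X t) + ⟪g' t i (X t), X (t + 1) - X t⟫| ≤ F + G * D := by
    intro t i
    have h1 := hgbd t i (X t) (hX t)
    have h2 : |⟪g' t i (X t), X (t + 1) - X t⟫| ≤ G * D :=
      le_trans (abs_real_inner_le_norm _ _)
        (mul_le_mul (hg'bd t i _ (hX t)) (hDX _ _) (norm_nonneg _) hG)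
    calc |g t i (X t) + ⟪g' t i (X t), X (t + 1) - X t⟫|
        ≤ |g t i (X t)| + |⟪g' t i (X t), X (t + 1) - X t⟫| := abs_add_le _ _
      _ ≤ F + G * D := add_le_add h1 h2
  -- one-step change of the queue
  have hstep : ∀ t, ‖QQ (t + 1)‖ ≤ ‖QQ t‖ + δ := by
    intro t
    match t with
    | 0 => rw [hQQ0, hQQ1]; linarith
    | (t+1) =>
      have hdiff : ∀ i : Fin k, |Q (t + 2) i - Q (t + 1) i| ≤ F + G * D := by
        intro i
        rw [hQrec]
        have ha := hQpos (t + 1) i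
        have hb := hgtilde t i
        rcases le_total 0 (Q (t + 1) i + g t i (X t) + ⟪g' t i (X t), X (t + 1) - X t⟫)
          with h | h
        · rw [max_eq_left h]
          rw [abs_le] at hb ⊢; constructor <;> linarith
        · rw [max_eq_right h]
          rw [abs_le] at hb ⊢; constructor <;> linarith
      have h1 : ‖QQ (t + 2) - QQ (t + 1)‖ ≤ δ := by
        rw [EuclideanSpace.norm_eq]
        have : ∀ i : Fin k, ‖(QQ (t + 2) - QQ (t + 1)) i‖ ^ 2 ≤ (F + G * D) ^ 2 := by
          intro i
          have : (QQ (t + 2) - QQ (t + 1)) i = Q (t + 2) i - Q (t + 1) i := rfl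
          rw [this, Real.norm_eq_abs, sq_abs]
          exact sq_le_sq' (by linarith [abs_le.mp (hdiff i)|>.1, abs_le.mp (hdiff i)|>.2])
            (abs_le.mp (hdiff i)|>.2)
        calc Real.sqrt (∑ i, ‖(QQ (t + 2) - QQ (t + 1)) i‖ ^ 2)
            ≤ Real.sqrt (∑ _i : Fin k, (F + G * D) ^ 2) :=
              Real.sqrt_le_sqrt (Finset.sum_le_sum fun i _ => this i)
          _ = δ := by
              rw [Finset.sum_const, Finset.card_univ, Fintype.card_fin, nsmul_eq_mul, hδ,
                Real.sqrt_mul (by positivity), Real.sqrt_sq (by positivity)]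
              ring_nf
      calc ‖QQ (t + 2)‖ = ‖QQ (t + 1) + (QQ (t + 2) - QQ (t + 1))‖ := by rw [add_sub_cancel]
        _ ≤ ‖QQ (t + 1)‖ + ‖QQ (t + 2) - QQ (t + 1)‖ := norm_add_le _ _
        _ ≤ ‖QQ (t + 1)‖ + δ := by linarith
  have hchain : ∀ a b : ℕ, ‖QQ (a + b)‖ ≤ ‖QQ a‖ + δ * b := by
    intro a b
    induction b with
    | zero => simp
    | succ b ihb =>
      have := hstep (a + b)
      push_cast
      calc ‖QQ (a + (b + 1))‖ = ‖QQ ((a + b) + 1)‖ := by ring_nf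
        _ ≤ ‖QQ (a + b)‖ + δ := hstep (a + b)
        _ ≤ ‖QQ a‖ + δ * b + δ := by linarith
        _ = ‖QQ a‖ + δ * ((b : ℝ) + 1) := by ring
  -- variational inequality for the algorithm's minimizer
  have hVI : ∀ t, ∀ y ∈ 𝒳,
      ⟪(V : ℝ) • f' t (X t) + ∑ i, Q (t + 1) i • g' t i (X t), X (t + 1) - y⟫ ≤
        α * ‖y - X t‖ ^ 2 - α * ‖X (t + 1) - X t‖ ^ 2 - α * ‖y - X (t + 1)‖ ^ 2 := by
    intro t y hy
    have halgt := halg t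
    set d : EuclideanSpace ℝ (Fin n) :=
      (V : ℝ) • f' t (X t) + ∑ i, Q (t + 1) i • g' t i (X t) with hd
    have key : 0 ≤ ⟪d, y - X (t+1)⟫ + 2*α*⟪X (t+1) - X t, y - X (t+1)⟫ := by
      by_contra hneg
      push_neg at hneg
      have hlam : ∀ lam : ℝ, 0 < lam → lam ≤ 1 →
          0 ≤ ⟪d, y - X (t+1)⟫ + 2*α*⟪X (t+1) - X t, y - X (t+1)⟫
            + α * lam * ‖y - X (t+1)‖^2 := by
        intro lam h0 h1
        have hmem : X (t+1) + lam • (y - X (t+1)) ∈ 𝒳 := by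
          have h2 := h_cvx (hX (t+1)) hy (by linarith : (0:ℝ) ≤ 1 - lam) h0.le (by ring)
          have h3 : (1 - lam) • X (t+1) + lam • y = X (t+1) + lam • (y - X (t+1)) := by
            rw [smul_sub, sub_smul, one_smul]; abel
          rwa [h3] at h2
        have h4 := halgt _ hmem
        have e1 : ⟪d, X (t+1) + lam • (y - X (t+1))⟫
            = ⟪d, X (t+1)⟫ + lam * ⟪d, y - X (t+1)⟫ := by
          rw [inner_add_right, real_inner_smul_right]
        have e2 : ‖X (t+1) + lam • (y - X (t+1)) - X t‖^2
            = ‖X (t+1) - X t‖^2 + 2*lam*⟪X (t+1) - X t, y - X (t+1)⟫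
              + lam^2*‖y - X (t+1)‖^2 := by
          have h5 : X (t+1) + lam • (y - X (t+1)) - X t
              = (X (t+1) - X t) + lam • (y - X (t+1)) := by abel
          rw [h5, norm_add_sq_real, real_inner_smul_right, norm_smul, Real.norm_eq_abs,
            mul_pow, sq_abs]
          ring
        rw [e1, e2] at h4
        have h6 : 0 ≤ lam * (⟪d, y - X (t+1)⟫ + 2*α*⟪X (t+1) - X t, y - X (t+1)⟫
            + α*lam*‖y - X (t+1)‖^2) := by nlinarith [h4]
        exact (mul_nonneg_iff_of_pos_left h0).mp h6
      rcases eq_or_lt_of_le (norm_nonneg (y - X (t+1))) with hw0 | hwpos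
      · have h7 := hlam 1 one_pos le_rfl
        rw [← hw0] at h7
        simp only [mul_one, ne_eq, OfNat.ofNat_ne_zero, not_false_eq_true, zero_pow,
          mul_zero, add_zero] at h7
        linarith
      · set lam := min 1 ((-(⟪d, y - X (t+1)⟫ + 2*α*⟪X (t+1) - X t, y - X (t+1)⟫))
          /(2*α*‖y - X (t+1)‖^2)) with hlamdef
        have hlampos : 0 < lam :=
          lt_min one_pos (div_pos (by linarith) (by positivity))
        have hlam1 : lam ≤ 1 := min_le_left _ _
        have h7 := hlam lam hlampos hlam1
        have h8 : α * lam * ‖y - X (t+1)‖^2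
            ≤ -(⟪d, y - X (t+1)⟫ + 2*α*⟪X (t+1) - X t, y - X (t+1)⟫)/2 := by
          have h9 : lam ≤ (-(⟪d, y - X (t+1)⟫ + 2*α*⟪X (t+1) - X t, y - X (t+1)⟫))
              /(2*α*‖y - X (t+1)‖^2) := min_le_right _ _
          have h10 : α * lam * ‖y - X (t+1)‖^2 ≤
              α * ((-(⟪d, y - X (t+1)⟫ + 2*α*⟪X (t+1) - X t, y - X (t+1)⟫))
              /(2*α*‖y - X (t+1)‖^2)) * ‖y - X (t+1)‖^2 := by
            have := mul_le_mul_of_nonneg_left h9 hαpos.le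
            exact mul_le_mul_of_nonneg_right this (by positivity)
          have h11 : α * ((-(⟪d, y - X (t+1)⟫ + 2*α*⟪X (t+1) - X t, y - X (t+1)⟫))
              /(2*α*‖y - X (t+1)‖^2)) * ‖y - X (t+1)‖^2
              = -(⟪d, y - X (t+1)⟫ + 2*α*⟪X (t+1) - X t, y - X (t+1)⟫)/2 := by
            field_simp
          linarith
        linarith
    have hid : 2*⟪X (t+1) - X t, y - X (t+1)⟫
        = ‖y - X t‖^2 - ‖X (t+1) - X t‖^2 - ‖y - X (t+1)‖^2 := by
      have h9 := norm_add_sq_real (X (t+1) - X t) (y - X (t+1))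
      have h10 : X (t+1) - X t + (y - X (t+1)) = y - X t := by abel
      rw [h10] at h9; linarith
    have h11 : ⟪d, X (t+1) - y⟫ = -⟪d, y - X (t+1)⟫ := by
      rw [← inner_neg_right, neg_sub]
    have h12 : 2*α*⟪X (t+1) - X t, y - X (t+1)⟫
        = α*(‖y - X t‖^2 - ‖X (t+1) - X t‖^2 - ‖y - X (t+1)‖^2) := by
      rw [← hid]; ring
    rw [h11]
    linarith [key, h12]
  -- step-size bound
  have hdXle : ∀ t, ‖X (t + 1) - X t‖ ≤
      ‖(V : ℝ) • f' t (X t) + ∑ i, Q (t + 1) i • g' t i (X t)‖ / (2 * α) := by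
    intro t
    have h1 := hVI t (X t) (hX t)
    simp only [sub_self, norm_zero] at h1
    rw [norm_sub_rev (X t) (X (t+1))] at h1
    have h5 : -⟪(V : ℝ) • f' t (X t) + ∑ i, Q (t + 1) i • g' t i (X t), X (t+1) - X t⟫
        ≤ ‖(V : ℝ) • f' t (X t) + ∑ i, Q (t + 1) i • g' t i (X t)‖ * ‖X (t+1) - X t‖ :=
      le_trans (neg_le_abs _) (abs_real_inner_le_norm _ _)
    have h4 : 2*α*‖X (t+1) - X t‖^2 ≤
        ‖(V : ℝ) • f' t (X t) + ∑ i, Q (t + 1) i • g' t i (X t)‖ * ‖X (t+1) - X t‖ := by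
      nlinarith [h1, h5]
    rcases eq_or_lt_of_le (norm_nonneg (X (t+1) - X t)) with hz | hz
    · rw [← hz]; positivity
    · rw [le_div_iff₀ (by positivity)]
      nlinarith [h4, hz]
  -- per-step drift inequality
  have hdrift : ∀ t, ‖QQ (t+2)‖^2/2 - ‖QQ (t+1)‖^2/2 ≤
      B + R*V - η*‖QQ (t+1)‖ + α*(‖s - X t‖^2 - ‖s - X (t+1)‖^2) := by
    intro t
    have hQsq : ∀ j : Fin k, Q (t+2) j ^2 ≤
        (Q (t+1) j + (g t j (X t) + ⟪g' t j (X t), X (t+1) - X t⟫))^2 := by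
      intro j
      rw [hQrec]
      rcases le_total (Q (t + 1) j + g t j (X t) + ⟪g' t j (X t), X (t + 1) - X t⟫) 0
        with h | h
      · rw [max_eq_right h]
        simpa using sq_nonneg (Q (t+1) j + (g t j (X t) + ⟪g' t j (X t), X (t+1) - X t⟫))
      · rw [max_eq_left h]
        apply le_of_eq; ring
    have hexpand : ∑ j, (Q (t+1) j + (g t j (X t) + ⟪g' t j (X t), X (t+1) - X t⟫))^2
        = ∑ j, Q (t+1) j^2
          + (2*∑ j, Q (t+1) j * (g t j (X t) + ⟪g' t j (X t), X (t+1) - X t⟫)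
          + ∑ j, (g t j (X t) + ⟪g' t j (X t), X (t+1) - X t⟫)^2) := by
      rw [Finset.mul_sum, ← Finset.sum_add_distrib, ← Finset.sum_add_distrib]
      exact Finset.sum_congr rfl fun j _ => by ring
    have hsum0 : ‖QQ (t+2)‖^2 ≤ ‖QQ (t+1)‖^2
        + 2*(∑ j, Q (t+1) j * (g t j (X t) + ⟪g' t j (X t), X (t+1) - X t⟫))
        + ∑ j, (g t j (X t) + ⟪g' t j (X t), X (t+1) - X t⟫)^2 := by
      rw [hQQsq, hQQsq]
      have := Finset.sum_le_sum (fun j (_ : j ∈ Finset.univ) => hQsq j)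
      rw [hexpand] at this
      linarith
    have hb2 : ∑ j, (g t j (X t) + ⟪g' t j (X t), X (t+1) - X t⟫)^2 ≤ 2*B := by
      calc ∑ j, (g t j (X t) + ⟪g' t j (X t), X (t+1) - X t⟫)^2
          ≤ ∑ _j : Fin k, (F + G*D)^2 := by
            refine Finset.sum_le_sum fun j _ => ?_
            have hj := hgtilde t j
            exact sq_le_sq' (by linarith [(abs_le.mp hj).1]) ((abs_le.mp hj).2)
        _ = (k:ℝ)*(F+G*D)^2 := by
            rw [Finset.sum_const, Finset.card_univ, Fintype.card_fin, nsmul_eq_mul]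
        _ = 2*B := by rw [hB]; ring
    have hVIs := hVI t s hs
    have hsplit : ∑ j, Q (t+1) j * ⟪g' t j (X t), X (t+1) - X t⟫
        = ⟪∑ j, Q (t+1) j • g' t j (X t), X (t+1) - X t⟫ := by
      rw [sum_inner]; simp only [real_inner_smul_left]
    have hsplit2 : ∑ j, Q (t+1) j * ⟪g' t j (X t), s - X t⟫
        = ⟪∑ j, Q (t+1) j • g' t j (X t), s - X t⟫ := by
      rw [sum_inner]; simp only [real_inner_smul_left]
    have hdistrib : ∑ j, Q (t+1) j * (g t j (X t) + ⟪g' t j (X t), X (t+1) - X t⟫)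
        = (∑ j, Q (t+1) j * (g t j (X t) + ⟪g' t j (X t), s - X t⟫))
          + ⟪∑ j, Q (t+1) j • g' t j (X t), X (t+1) - X t⟫
          - ⟪∑ j, Q (t+1) j • g' t j (X t), s - X t⟫ := by
      rw [← hsplit, ← hsplit2, ← Finset.sum_add_distrib, ← Finset.sum_sub_distrib]
      exact Finset.sum_congr rfl fun j _ => by ring
    have hexp : ∀ v : EuclideanSpace ℝ (Fin n),
        ⟪(V : ℝ) • f' t (X t) + ∑ j, Q (t + 1) j • g' t j (X t), v⟫
        = (V:ℝ)*⟪f' t (X t), v⟫ + ⟪∑ j, Q (t+1) j • g' t j (X t), v⟫ := by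
      intro v; rw [inner_add_left, real_inner_smul_left]
    have hexp1 := hexp (X (t+1) - X t)
    have hexp2 := hexp (s - X t)
    have hdec : ⟪(V : ℝ) • f' t (X t) + ∑ j, Q (t + 1) j • g' t j (X t), X (t+1) - X t⟫
        = ⟪(V : ℝ) • f' t (X t) + ∑ j, Q (t + 1) j • g' t j (X t), X (t+1) - s⟫
          + ⟪(V : ℝ) • f' t (X t) + ∑ j, Q (t + 1) j • g' t j (X t), s - X t⟫ := by
      rw [← inner_add_right]; congr 1; abel
    have hslat : ∑ j, Q (t+1) j * (g t j (X t) + ⟪g' t j (X t), s - X t⟫)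
        ≤ -η * ∑ j, Q (t+1) j := by
      rw [Finset.mul_sum]
      refine Finset.sum_le_sum fun j _ => ?_
      have h1 := hgsub t j (X t) (hX t) s hs
      have h2 := hslater t j
      have h3 := hQpos (t+1) j
      calc Q (t+1) j * (g t j (X t) + ⟪g' t j (X t), s - X t⟫)
          ≤ Q (t+1) j * (-η) := mul_le_mul_of_nonneg_left (by linarith) h3
        _ = -η * Q (t+1) j := by ring
    have hslatnorm : η*‖QQ (t+1)‖ ≤ η * ∑ j, Q (t+1) j :=
      mul_le_mul_of_nonneg_left (hsumQ_ge (t+1)) hη.le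
    have hfpart : (V:ℝ)*⟪f' t (X t), s - X t⟫ ≤ (V:ℝ)*(2*F) := by
      have h1 := hfsub t (X t) (hX t) s hs
      have h2 := abs_le.mp (hfbd t (X t) (hX t))
      have h3 := abs_le.mp (hfbd t s hs)
      exact mul_le_mul_of_nonneg_left (by linarith) hVpos.le
    have hfpart2 : -((V:ℝ)*⟪f' t (X t), X (t+1) - X t⟫) ≤ (V:ℝ)*(G*‖X (t+1) - X t‖) := by
      have h1 : -⟪f' t (X t), X (t+1) - X t⟫ ≤ G*‖X (t+1) - X t‖ := by
        have h2 := abs_real_inner_le_norm (f' t (X t)) (X (t+1) - X t)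
        have h3 := hf'bd t (X t) (hX t)
        have h4 := neg_le_abs ⟪f' t (X t), X (t+1) - X t⟫
        nlinarith [norm_nonneg (X (t+1) - X t)]
      have := mul_le_mul_of_nonneg_left h1 hVpos.le
      linarith
    have hquad : (V:ℝ)*(G*‖X (t+1) - X t‖) - α*‖X (t+1) - X t‖^2
        ≤ (V:ℝ)^2*G^2/(4*α) := by
      rw [le_div_iff₀ (by positivity : (0:ℝ) < 4*α)]
      nlinarith only [sq_nonneg ((V:ℝ)*G - 2*α*‖X (t+1) - X t‖), hαpos]
    have hRV : (V:ℝ)*(2*F) + (V:ℝ)^2*G^2/(4*α) ≤ R*V := by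
      rw [hR, add_mul]
      have h1 : (V:ℝ)*G^2/(2*α)*V = (V:ℝ)^2*G^2/(2*α) := by ring
      rw [h1]
      have h2 : (V:ℝ)^2*G^2/(4*α) ≤ (V:ℝ)^2*G^2/(2*α) := by
        rw [div_le_div_iff₀ (by positivity) (by positivity)]
        nlinarith only [sq_nonneg ((V:ℝ)*G), hαpos]
      linarith
    linarith only [hsum0, hb2, hdistrib, hdec, hexp1, hexp2, hVIs, hslat, hslatnorm,
      hfpart, hfpart2, hquad, hRV]
  -- multi-step drift
  have key_sum : ∀ σ m : ℕ, ‖QQ (σ + m + 1)‖^2/2 - ‖QQ (σ + 1)‖^2/2 ≤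
      (m:ℝ)*(B + R*V) + α*(‖s - X σ‖^2 - ‖s - X (σ + m)‖^2)
        - η * ∑ u ∈ Finset.range m, ‖QQ (σ + u + 1)‖ := by
    intro σ m
    induction m with
    | zero => simp
    | succ m ih =>
      have hd := hdrift (σ + m)
      rw [Finset.sum_range_succ,
        show σ + (m+1) + 1 = σ + m + 2 from by omega,
        show σ + (m+1) = σ + m + 1 from by omega]
      push_cast
      linarith only [hd, ih]
  -- uniform bound on the queue
  have hQbV : ∀ t, ‖QQ t‖ ≤ θ * V := by
    intro t
    induction t using Nat.strong_induction_on with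
    | _ t ih =>
    rcases Nat.lt_or_ge t (V+2) with hsmall | hbig
    · rcases Nat.eq_zero_or_pos t with rfl | ht1
      · rw [hQQ0]; positivity
      · have h2 : ‖QQ (1 + (t-1))‖ ≤ ‖QQ 1‖ + δ*(t-1 : ℕ) := hchain 1 (t-1)
        rw [show 1 + (t-1) = t from by omega, hQQ1] at h2
        have h3 : ((t-1 : ℕ):ℝ) ≤ (V:ℝ) := by exact_mod_cast (by omega : t - 1 ≤ V)
        calc ‖QQ t‖ ≤ 0 + δ*((t-1 : ℕ):ℝ) := h2
          _ ≤ δ * V := by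
              rw [zero_add]
              exact mul_le_mul_of_nonneg_left h3 hδ0
          _ ≤ θ * V := mul_le_mul_of_nonneg_right hθδ hVpos.le
    · by_contra hcon
      push_neg at hcon
      set σ := t - (V+2) with hσdef
      have hτlt : σ + 1 < t := by omega
      have hIH := ih (σ+1) hτlt
      have hks := key_sum σ (V+1)
      rw [show σ + (V+1) + 1 = t from by omega] at hks
      push_cast at hks
      -- lower bound for the window sum
      have hlow : ∀ u ∈ Finset.range (V+1),
          ‖QQ t‖ - δ*((V+1-u : ℕ):ℝ) ≤ ‖QQ (σ + u + 1)‖ := by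
        intro u hu
        have hu' : u < V + 1 := Finset.mem_range.mp hu
        have h4 := hchain (σ + u + 1) (V + 1 - u)
        rw [show σ + u + 1 + (V + 1 - u) = t from by omega] at h4
        linarith only [h4]
      have hsum_low : ((V:ℝ)+1)*‖QQ t‖ - δ * (((V:ℝ)+1)*((V:ℝ)+2)/2)
          ≤ ∑ u ∈ Finset.range (V+1), ‖QQ (σ + u + 1)‖ := by
        have h5 := Finset.sum_le_sum hlow
        rw [Finset.sum_sub_distrib, Finset.sum_const, Finset.card_range,
          ← Finset.mul_sum, gauss_aux (V+1)] at h5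
        rw [nsmul_eq_mul] at h5
        push_cast at h5
        linarith only [h5]
      have hz1 : 0 < ‖QQ t‖ - ‖QQ (σ+1)‖ := by linarith only [hIH, hcon]
      have hz2 : 0 < ‖QQ t‖ + ‖QQ (σ+1)‖ := by
        linarith only [norm_nonneg (QQ (σ+1)), hcon, mul_nonneg hθ0 hVpos.le]
      have hpos : 0 < ‖QQ t‖^2/2 - ‖QQ (σ+1)‖^2/2 := by
        nlinarith only [mul_pos hz1 hz2]
      have ha2 : ‖s - X σ‖^2 ≤ D^2 := by
        nlinarith only [hDs σ, norm_nonneg (s - X σ), hD]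
      have hD2 : α*(‖s - X σ‖^2 - ‖s - X (σ+(V+1))‖^2) ≤ α*D^2 := by
        nlinarith only [ha2, sq_nonneg ‖s - X (σ+(V+1))‖, hαpos]
      have h6 := mul_le_mul_of_nonneg_left hsum_low hη.le
      have hfinal : η*(((V:ℝ)+1)*‖QQ t‖) < ((V:ℝ)+1)*(B+R*V) + α*D^2
          + η*(δ*(((V:ℝ)+1)*((V:ℝ)+2)/2)) := by
        nlinarith only [hks, h6, hpos, hD2]
      have hθ2 : (B + R*V) / (η*V) + α*D^2/(η*V*((V:ℝ)+1)) + δ*((V:ℝ)+2)/(2*V) ≤ θ := by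
        rw [hθ]; exact le_max_right _ _
      have hkey2 : ((V:ℝ)+1)*(B+R*V) + α*D^2 + η*(δ*(((V:ℝ)+1)*((V:ℝ)+2)/2))
          ≤ θ * (η*((V:ℝ)+1)*(V:ℝ)) := by
        have h7 := mul_le_mul_of_nonneg_right hθ2
          (by positivity : (0:ℝ) ≤ η*((V:ℝ)+1)*(V:ℝ))
        have h8 : ((B + R*V) / (η*V) + α*D^2/(η*V*((V:ℝ)+1)) + δ*((V:ℝ)+2)/(2*V))
            * (η*((V:ℝ)+1)*(V:ℝ))
            = ((V:ℝ)+1)*(B+R*V) + α*D^2 + η*(δ*(((V:ℝ)+1)*((V:ℝ)+2)/2)) := by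
          field_simp
        rw [h8] at h7
        exact h7
      have h9 : η*((V:ℝ)+1)*(θ*V) < η*((V:ℝ)+1)*‖QQ t‖ :=
        mul_lt_mul_of_pos_left hcon (by positivity)
      linarith only [hfinal, hkey2, h9]
  -- final assembly
  intro i T hT
  have hTpos : (0:ℝ) < T := by exact_mod_cast hT
  have hper : ∀ t, g t i (X t) ≤ Q (t+2) i - Q (t+1) i + G*‖X (t+1) - X t‖ := by
    intro t
    have h1 : Q (t+1) i + g t i (X t) + ⟪g' t i (X t), X (t+1) - X t⟫ ≤ Q (t+2) i := by
      rw [hQrec]; exact le_max_left _ _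
    have h3 := abs_real_inner_le_norm (g' t i (X t)) (X (t+1) - X t)
    have h5 : ‖g' t i (X t)‖*‖X (t+1) - X t‖ ≤ G*‖X (t+1) - X t‖ :=
      mul_le_mul_of_nonneg_right (hg'bd t i (X t) (hX t)) (norm_nonneg _)
    have h6 := neg_le_abs ⟪g' t i (X t), X (t+1) - X t⟫
    linarith only [h1, h3, h5, h6]
  have hCbd : ∀ t, G*‖X (t+1) - X t‖ ≤
      G^2/(4*(V:ℝ)) + G^2*(1+θ*Real.sqrt k)^2/(4*(V:ℝ)) := by
    intro t
    have h1 := hdXle t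
    have ha : ‖(V:ℝ) • f' t (X t)‖ ≤ (V:ℝ)*G := by
      rw [norm_smul, Real.norm_eq_abs, abs_of_nonneg hVpos.le]
      exact mul_le_mul_of_nonneg_left (hf'bd t _ (hX t)) hVpos.le
    have hbb : ‖∑ j, Q (t+1) j • g' t j (X t)‖ ≤ ∑ j, Q (t+1) j * G := by
      refine le_trans (norm_sum_le _ _) (Finset.sum_le_sum fun j _ => ?_)
      rw [norm_smul, Real.norm_eq_abs, abs_of_nonneg (hQpos (t+1) j)]
      exact mul_le_mul_of_nonneg_left (hg'bd t j _ (hX t)) (hQpos (t+1) j)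
    have h9 : (∑ j, Q (t+1) j) ≤ Real.sqrt k*(θ*V) :=
      le_trans (hsumQ_le (t+1))
        (mul_le_mul_of_nonneg_left (hQbV (t+1)) (Real.sqrt_nonneg _))
    have hcc : ∑ j, Q (t+1) j * G ≤ G*(Real.sqrt k * (θ*V)) := by
      rw [← Finset.sum_mul]
      calc (∑ j, Q (t+1) j)*G ≤ (Real.sqrt k*(θ*V))*G :=
            mul_le_mul_of_nonneg_right h9 hG
        _ = G*(Real.sqrt k * (θ*V)) := by ring
    have h2 : ‖(V:ℝ) • f' t (X t) + ∑ j, Q (t+1) j • g' t j (X t)‖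
        ≤ (V:ℝ)*G + G*(Real.sqrt k * (θ*V)) := by
      calc ‖(V:ℝ) • f' t (X t) + ∑ j, Q (t+1) j • g' t j (X t)‖
          ≤ ‖(V:ℝ) • f' t (X t)‖ + ‖∑ j, Q (t+1) j • g' t j (X t)‖ := norm_add_le _ _
        _ ≤ (V:ℝ)*G + G*(Real.sqrt k * (θ*V)) := by
            linarith only [ha, hbb, hcc]
    have h3 : ‖X (t+1) - X t‖ ≤ G*(1+θ*Real.sqrt k)/(2*(V:ℝ)) := by
      calc ‖X (t+1) - X t‖
          ≤ ‖(V:ℝ) • f' t (X t) + ∑ j, Q (t+1) j • g' t j (X t)‖/(2*α) := h1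
        _ ≤ ((V:ℝ)*G + G*(Real.sqrt k * (θ*V)))/(2*α) := by gcongr
        _ = G*(1+θ*Real.sqrt k)/(2*(V:ℝ)) := by
            rw [hαdef]
            have hVne : (V:ℝ) ≠ 0 := ne_of_gt hVpos
            field_simp
    have h4 : G*‖X (t+1) - X t‖ ≤ G*(G*(1+θ*Real.sqrt k)/(2*(V:ℝ))) :=
      mul_le_mul_of_nonneg_left h3 hG
    have h5 : G*(G*(1+θ*Real.sqrt k)/(2*(V:ℝ)))
        ≤ G^2/(4*(V:ℝ)) + G^2*(1+θ*Real.sqrt k)^2/(4*(V:ℝ)) := by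
      rw [← add_div, ← mul_div_assoc, div_le_div_iff₀ (by positivity) (by positivity)]
      nlinarith only [sq_nonneg (G - G*(1+θ*Real.sqrt k)), hVpos]
    linarith only [h4, h5]
  have htel : ∑ t ∈ Finset.range T, (Q (t+2) i - Q (t+1) i) = Q (T+1) i - Q 1 i := by
    have h1 := Finset.sum_range_sub (fun u => Q (u+1) i) T
    rw [← h1]
  have hsumbd : ∑ t ∈ Finset.range T, g t i (X t) ≤
      θ*V + (T:ℝ)*(G^2/(4*(V:ℝ)) + G^2*(1+θ*Real.sqrt k)^2/(4*(V:ℝ))) := by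
    have h1 : ∑ t ∈ Finset.range T, g t i (X t) ≤
        ∑ t ∈ Finset.range T, ((Q (t+2) i - Q (t+1) i)
          + (G^2/(4*(V:ℝ)) + G^2*(1+θ*Real.sqrt k)^2/(4*(V:ℝ)))) := by
      refine Finset.sum_le_sum fun t _ => ?_
      linarith only [hper t, hCbd t]
    rw [Finset.sum_add_distrib, htel, Finset.sum_const, Finset.card_range,
      nsmul_eq_mul] at h1
    have h2 : Q (T+1) i ≤ θ*V := le_trans (hQle (T+1) i) (hQbV (T+1))
    rw [hQ1 i] at h1
    linarith only [h1, h2]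
  have h3 := mul_le_mul_of_nonneg_left hsumbd (by positivity : (0:ℝ) ≤ 1/(T:ℝ))
  calc (1 / (T : ℝ)) * ∑ t ∈ Finset.range T, g t i (X t)
      ≤ (1/(T:ℝ))*(θ*V + (T:ℝ)*(G^2/(4*(V:ℝ))
        + G^2*(1+θ*Real.sqrt k)^2/(4*(V:ℝ)))) := h3
    _ = θ * V / T + G ^ 2 / (4 * V) + G ^ 2 * (1 + θ * Real.sqrt k) ^ 2 / (4 * V) := by
        have hTne : (T:ℝ) ≠ 0 := ne_of_gt hTpos
        field_simp
        ring
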